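/- arXiv:2103.04614 — 3 statements merged into one kernel-verified Lean document; each statement's English description precedes it below -/
import Mathlib

section
/- In the SIQR model with initial state (N-ε, ε, 0, 0), one has Q''(0) = αε(β(1-ε/N) - α - 2ρ), and consequently (-h₁Q' + Q'')|_{t=0} = -αρε < 0. -/
/-- Q''(0) = αε(β(1-ε/N)-α-2ρ) and (-h₁Q'+Q'')(0) = -αρε < 0. -/
theorem siqr_Qsecond_initial_value
    (β ρ α N ε : ℝ) (hβ : 0 < β) (hρ : 0 < ρ) (hα : 0 < α)
    (hε : 0 < ε) (hεN : ε < N)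
    (S I Q Q' : ℝ → ℝ) (hS0 : S 0 = N - ε) (hI0 : I 0 = ε) (hQ0 : Q 0 = 0)
    (hQ' : ∀ s, Q' s = α * I s - ρ * Q s)
    (hQd : ∀ s, HasDerivAt Q (Q' s) s)
    (hI : HasDerivAt I (β * S 0 * I 0 / (N - Q 0) - (ρ + α) * I 0) 0)
    (q2 : ℝ) (hq2 : HasDerivAt Q' q2 0) :
    q2 = α * ε * (β * (1 - ε / N) - α - 2 * ρ) ∧
    -(β * (1 - ε / N) - ρ - α) * Q' 0 + q2 = -(α * ρ * ε) ∧
    -(β * (1 - ε / N) - ρ - α) * Q' 0 + q2 < 0 := by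
  have hN : (0:ℝ) < N := lt_trans hε hεN
  have hQ'fun : Q' = fun s => α * I s - ρ * Q s := funext hQ'
  have hD : HasDerivAt Q' (α * (β * S 0 * I 0 / (N - Q 0) - (ρ + α) * I 0)
      - ρ * (α * I 0 - ρ * Q 0)) 0 := by
    rw [hQ'fun]
    exact (hI.const_mul α).sub (((hQ' 0) ▸ (hQd 0)).const_mul ρ)
  have h1 : q2 = α * (β * S 0 * I 0 / (N - Q 0) - (ρ + α) * I 0)
      - ρ * (α * I 0 - ρ * Q 0) := hq2.unique hD
  have hQ'0 : Q' 0 = α * ε := by rw [hQ' 0, hI0, hQ0]; ring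
  have hq2v : q2 = α * ε * (β * (1 - ε / N) - α - 2 * ρ) := by
    rw [h1, hS0, hI0, hQ0]
    field_simp [hN.ne']
    ring
  refine ⟨hq2v, ?_, ?_⟩
  · rw [hq2v, hQ'0]; ring
  · rw [hq2v, hQ'0]
    have : -(β * (1 - ε / N) - ρ - α) * (α * ε)
        + α * ε * (β * (1 - ε / N) - α - 2 * ρ) = -(α * ρ * ε) := by ring
    rw [this]
    nlinarith [mul_pos (mul_pos hα hρ) hε]
end

section
/- In the SIQR model, the quantity X := -βI + Q' satisfies the quadratic equation h₁'·X² + (h₂h₁ - h₂')·X + h₂·(-h₁Q' + Q'') = 0 wherever I > 0 and Q < N, where h₁ = y₁'/y₁ and h₂ = (N-Q)h₁'. -/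
/-- X = -βI + Q' satisfies h₁'X² + (h₂h₁ - h₂')X + h₂(-h₁Q'+Q'') = 0. -/
theorem siqr_quadratic_identity
    (β ρ α N : ℝ) (hβ : 0 < β) (hρ : 0 < ρ) (hα : 0 < α)
    (S I Q Q' : ℝ → ℝ) (t : ℝ) (hIpos : 0 < I t) (hQlt : Q t < N)
    (hQ' : ∀ s, Q' s = α * I s - ρ * Q s)
    (hQd : ∀ s, HasDerivAt Q (Q' s) s)
    (hS : ∀ s, HasDerivAt S (-β * S s * I s / (N - Q s)) s)
    (hI : ∀ s, HasDerivAt I (β * S s * I s / (N - Q s) - (ρ + α) * I s) s)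
    (h1 h1' h2 : ℝ → ℝ)
    (hh1 : ∀ s, h1 s = β * S s / (N - Q s) - α - ρ)
    (hh1d : ∀ s, HasDerivAt h1 (h1' s) s)
    (hh2 : ∀ s, h2 s = (N - Q s) * h1' s)
    (d2 : ℝ) (hd2 : HasDerivAt h2 d2 t)
    (q2 : ℝ) (hq2 : HasDerivAt Q' q2 t) :
    h1' t * (-β * I t + Q' t) ^ 2 + (h2 t * h1 t - d2) * (-β * I t + Q' t)
      + h2 t * (-h1 t * Q' t + q2) = 0 := by
  have hu : N - Q t ≠ 0 := sub_ne_zero.2 (ne_of_lt hQlt).symm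
  have hQc : ContinuousAt Q t := (hQd t).continuousAt
  have hev : ∀ᶠ s in nhds t, N - Q s ≠ 0 :=
    (continuousAt_const.sub hQc).eventually_ne hu
  -- formula for h1'
  have key : ∀ s, N - Q s ≠ 0 →
      h1' s = β * S s * (-β * I s + Q' s) / (N - Q s) ^ 2 := by
    intro s hs
    have h1eq : h1 = fun x => β * S x / (N - Q x) - α - ρ := funext hh1
    have hnum : HasDerivAt (fun x => β * S x) (β * (-β * S s * I s / (N - Q s))) s :=
      (hS s).const_mul β
    have hden : HasDerivAt (fun x => N - Q x) (-Q' s) s := (hQd s).const_sub N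
    have hd : HasDerivAt h1 (β * S s * (-β * I s + Q' s) / (N - Q s) ^ 2) s := by
      rw [h1eq]
      have h := ((hnum.div hden hs).sub_const α).sub_const ρ
      refine h.congr_deriv ?_
      field_simp
      ring
    exact (hh1d s).unique hd
  -- formula for h2 near t
  have h2ev : h2 =ᶠ[nhds t] fun s => β * S s * (-β * I s + Q' s) / (N - Q s) := by
    filter_upwards [hev] with s hs
    rw [hh2 s, key s hs]
    field_simp
  -- derivative of that formula at t
  have hGd :=
    (((hS t).const_mul β).mul (((hI t).const_mul (-β)).add hq2)).div
      ((hQd t).const_sub N) hu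
  have hh2d := hGd.congr_of_eventuallyEq h2ev
  have hd2eq := hd2.unique hh2d
  simp only [Pi.mul_apply, Pi.add_apply] at hd2eq
  -- formula for q2
  have hQ'fun : Q' = fun s => α * I s - ρ * Q s := funext hQ'
  have hq2' : HasDerivAt Q'
      (α * (β * S t * I t / (N - Q t) - (ρ + α) * I t) - ρ * (α * I t - ρ * Q t)) t := by
    rw [hQ'fun]
    have h := ((hI t).const_mul α).sub ((hQd t).const_mul ρ)
    refine h.congr_deriv ?_
    rw [hQ' t]
  have hq2eq : q2 = _ := hq2.unique hq2'
  rw [hd2eq, hq2eq, key t hu, hh2 t, key t hu, hh1 t, hQ' t]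
  field_simp
  ring
end

section
/- The 4×4 matrix M₁ with rows (-K₁, 0, 1, -1), (-K₂, 0, 0, -1), (-K₃, 0, 0, 0), (-K₄, -1, 0, 0), where K₁ = σ₁, K₂ = σ₁ + σ₃, K₃ = -σ₄, K₄ = -(σ₂ + σ₄ + 1) with σ_k the k-th elementary symmetric polynomial of positive reals λ₁,...,λ₄, has characteristic polynomial (X+λ₁)(X+λ₂)(X+λ₃)(X+λ₄), i.e., its eigenvalues are -λ₁, ..., -λ₄. -/
open Polynomial

theorem det_fin_four' {R : Type*} [CommRing R] (a b c d e f g h i j k l m n o p : R) :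
    (!![a,b,c,d; e,f,g,h; i,j,k,l; m,n,o,p] : Matrix (Fin 4) (Fin 4) R).det =
      a*f*k*p - a*f*l*o - a*g*j*p + a*g*l*n + a*h*j*o - a*h*k*n
    - b*e*k*p + b*e*l*o + b*g*i*p - b*g*l*m - b*h*i*o + b*h*k*m
    + c*e*j*p - c*e*l*n - c*f*i*p + c*f*l*m + c*h*i*n - c*h*j*m
    - d*e*j*o + d*e*k*n + d*f*i*o - d*f*k*m - d*g*i*n + d*g*j*m := by
  rw [Matrix.det_succ_row_zero, Fin.sum_univ_four]
  simp (config := { decide := true }) [Matrix.det_fin_three, Matrix.submatrix_apply,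
    Fin.succAbove, Fin.castSucc, Fin.castAdd, Fin.castLE, Fin.lt_def]
  ring

/-- the observer matrix M₁ has eigenvalues -λ₁,...,-λ₄. -/
theorem observer_matrix_M1_charpoly
    (l1 l2 l3 l4 : ℝ) (hl1 : 0 < l1) (hl2 : 0 < l2) (hl3 : 0 < l3) (hl4 : 0 < l4) :
    let σ1 := l1 + l2 + l3 + l4
    let σ2 := l1*l2 + l1*l3 + l1*l4 + l2*l3 + l2*l4 + l3*l4
    let σ3 := l1*l2*l3 + l1*l2*l4 + l1*l3*l4 + l2*l3*l4
    let σ4 := l1*l2*l3*l4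
    let K1 := σ1
    let K2 := σ1 + σ3
    let K3 := -σ4
    let K4 := -(σ2 + σ4 + 1)
    let M1 : Matrix (Fin 4) (Fin 4) ℝ :=
      !![-K1, 0, 1, -1;
         -K2, 0, 0, -1;
         -K3, 0, 0, 0;
         -K4, -1, 0, 0]
    M1.charpoly = (X + C l1) * (X + C l2) * (X + C l3) * (X + C l4) := by
  intro σ1 σ2 σ3 σ4 K1 K2 K3 K4 M1
  have h : M1.charmatrix =
      !![X + C K1, 0, -C 1, C 1;
         C K2, X, 0, C 1;
         C K3, 0, X, 0;
         C K4, C 1, 0, X] := by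
    ext i j
    fin_cases i <;> fin_cases j <;>
      simp [M1, Matrix.charmatrix_apply, Matrix.one_apply, Matrix.vecHead, Matrix.vecTail]
  rw [Matrix.charpoly, h, det_fin_four']
  simp only [K1, K2, K3, K4, σ1, σ2, σ3, σ4, map_neg, map_add, map_mul, map_one]
  ring
end
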